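/- Let N ≥ 1 and let A be an N-by-N integer matrix with det(A) ≠ 0, viewed as a real matrix. Let ρ(A) denote its spectral radius (the maximum absolute value of its complex eigenvalues) and let D be the function D(B) = Σ_{j=1}^N max⁺{−b_{ij} : 1 ≤ i ≤ N} + max⁺{Σ_{j=1}^N b_{ij} : 1 ≤ i ≤ N}, where max⁺(S) = max(0, max S). Then ρ(A) ≥ ((2^{1/N} − 1)/(2N²)) · min_{0 ≤ k ≤ N−1} ( D(A^{k+1}) / D(A^k) ). (By the Hasselblatt–Propp formulas ρ(A) = δ(φ_A) and D(A^k) = deg(φ_A^k), this says the dynamical degree of the monomial map φ_A satisfies δ(φ_A) ≥ ((2^{1/N} − 1)/(2N²))·min_{0 ≤ k ≤ N−1} deg(φ_A^{k+1})/deg(φ_A^k).) -/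

import Mathlib

/-- `max⁺` of a finite family of reals: `max(0, max S)`. -/
noncomputable def maxPlus {N : ℕ} (f : Fin N → ℝ) : ℝ :=
  Finset.univ.fold max 0 f

/-- Hasselblatt–Propp degree function
`D(B) = Σ_j max⁺{−b_{ij} : i} + max⁺{Σ_j b_{ij} : i}`, so that for an integer
matrix `B` with `det B ≠ 0`, `D(B)` is the degree of the monomial map `φ_B`. -/
noncomputable def Dfun {N : ℕ} (B : Matrix (Fin N) (Fin N) ℝ) : ℝ :=
  (∑ j : Fin N, maxPlus fun i : Fin N => -B i j) +
    maxPlus fun i : Fin N => ∑ j : Fin N, B i j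

/-- The spectral radius of a complex matrix: the maximum absolute value of its
eigenvalues, i.e. of the roots of its characteristic polynomial. -/
noncomputable def specRad {N : ℕ} (A : Matrix (Fin N) (Fin N) ℂ) : ℝ :=
  (A.charpoly.roots.map (fun z : ℂ => ‖z‖)).fold max 0

/-! ### Auxiliary lemmas -/

lemma ms_fold_max_nonneg (s : Multiset ℝ) : 0 ≤ s.fold max 0 := by
  induction s using Multiset.induction_on with
  | empty => simp
  | cons a s ih =>
    rw [Multiset.fold_cons_left]
    exact le_trans ih (le_max_right _ _)

lemma ms_le_fold_max (s : Multiset ℝ) (a : ℝ) (h : a ∈ s) : a ≤ s.fold max 0 := by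
  induction s using Multiset.induction_on with
  | empty => simp at h
  | cons b s ih =>
    rw [Multiset.fold_cons_left]
    rcases Multiset.mem_cons.mp h with h | h
    · subst h; exact le_max_left _ _
    · exact le_trans (ih h) (le_max_right _ _)

lemma maxPlus_nonneg {N : ℕ} (f : Fin N → ℝ) : 0 ≤ maxPlus f :=
  (Finset.le_fold_max 0).mpr (Or.inl le_rfl)

lemma le_maxPlus {N : ℕ} (f : Fin N → ℝ) (i : Fin N) : f i ≤ maxPlus f :=
  (Finset.le_fold_max (f i)).mpr (Or.inr ⟨i, Finset.mem_univ i, le_rfl⟩)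

lemma maxPlus_le {N : ℕ} (f : Fin N → ℝ) (c : ℝ) (hc : 0 ≤ c) (h : ∀ i, f i ≤ c) :
    maxPlus f ≤ c :=
  (Finset.fold_max_le c).mpr ⟨hc, fun i _ => h i⟩

lemma Dfun_nonneg {N : ℕ} (B : Matrix (Fin N) (Fin N) ℝ) : 0 ≤ Dfun B :=
  add_nonneg (Finset.sum_nonneg fun j _ => maxPlus_nonneg _) (maxPlus_nonneg _)

lemma neg_entry_le_Dfun {N : ℕ} (B : Matrix (Fin N) (Fin N) ℝ) (i j : Fin N) :
    -B i j ≤ Dfun B := by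
  have h1 : -B i j ≤ maxPlus fun i' : Fin N => -B i' j := le_maxPlus (fun i' : Fin N => -B i' j) i
  have h2 : maxPlus (fun i' : Fin N => -B i' j) ≤
      ∑ j' : Fin N, maxPlus fun i' : Fin N => -B i' j' :=
    Finset.single_le_sum (f := fun j' : Fin N => maxPlus fun i' : Fin N => -B i' j') (fun j' _ => maxPlus_nonneg _) (Finset.mem_univ j)
  have h3 := maxPlus_nonneg fun i' : Fin N => ∑ j' : Fin N, B i' j'
  unfold Dfun
  linarith

lemma entry_le_Dfun {N : ℕ} (B : Matrix (Fin N) (Fin N) ℝ) (i j : Fin N) :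
    B i j ≤ Dfun B := by
  have hz : (∑ j' ∈ Finset.univ.erase j, -B i j') +
      ∑ j' ∈ Finset.univ.erase j, B i j' = 0 := by
    rw [← Finset.sum_add_distrib]; simp
  have hsplit : ∑ j' : Fin N, B i j' = B i j + ∑ j' ∈ Finset.univ.erase j, B i j' :=
    (Finset.add_sum_erase _ _ (Finset.mem_univ j)).symm
  have h1 : ∑ j' ∈ Finset.univ.erase j, -B i j' ≤
      ∑ j' ∈ Finset.univ.erase j, maxPlus fun i' : Fin N => -B i' j' :=
    Finset.sum_le_sum fun j' _ => le_maxPlus (fun i' : Fin N => -B i' j') i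
  have h2 : ∑ j' ∈ Finset.univ.erase j, (maxPlus fun i' : Fin N => -B i' j') ≤
      ∑ j' : Fin N, maxPlus fun i' : Fin N => -B i' j' :=
    Finset.sum_le_sum_of_subset_of_nonneg (Finset.subset_univ _)
      (fun j' _ _ => maxPlus_nonneg _)
  have h3 : ∑ j' : Fin N, B i j' ≤ maxPlus fun i' : Fin N => ∑ j' : Fin N, B i' j' :=
    le_maxPlus (fun i' : Fin N => ∑ j' : Fin N, B i' j') i
  unfold Dfun
  linarith

lemma abs_entry_le_Dfun {N : ℕ} (B : Matrix (Fin N) (Fin N) ℝ) (i j : Fin N) :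
    |B i j| ≤ Dfun B :=
  abs_le.mpr ⟨neg_le.mp (neg_entry_le_Dfun B i j), entry_le_Dfun B i j⟩

lemma Dfun_le_of_abs_le {N : ℕ} (B : Matrix (Fin N) (Fin N) ℝ) (M : ℝ) (hM : 0 ≤ M)
    (h : ∀ i j, |B i j| ≤ M) : Dfun B ≤ 2 * N * M := by
  have h1 : ∀ j : Fin N, maxPlus (fun i : Fin N => -B i j) ≤ M := fun j =>
    maxPlus_le _ M hM fun i => neg_le.mp (neg_le_of_abs_le (h i j))
  have h2 : maxPlus (fun i : Fin N => ∑ j : Fin N, B i j) ≤ N * M := by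
    refine maxPlus_le _ _ (by positivity) fun i => ?_
    calc ∑ j : Fin N, B i j ≤ ∑ _j : Fin N, M :=
          Finset.sum_le_sum fun j _ => le_of_abs_le (h i j)
      _ = N * M := by simp [mul_comm]
  calc Dfun B ≤ (∑ _j : Fin N, M) + N * M :=
        add_le_add (Finset.sum_le_sum fun j _ => h1 j) h2
    _ = 2 * N * M := by
        simp only [Finset.sum_const, Finset.card_univ, Fintype.card_fin, nsmul_eq_mul]
        ring

lemma norm_ms_prod_le (ρ : ℝ) (hρ : 0 ≤ ρ) (t : Multiset ℂ)
    (h : ∀ z ∈ t, ‖z‖ ≤ ρ) : ‖t.prod‖ ≤ ρ ^ Multiset.card t := by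
  induction t using Multiset.induction_on with
  | empty => simp
  | cons a t ih =>
    have ht := ih fun z hz => h z (Multiset.mem_cons_of_mem hz)
    have ha := h a (Multiset.mem_cons_self a t)
    rw [Multiset.prod_cons, Multiset.card_cons, pow_succ, norm_mul, mul_comm (ρ ^ _) ρ]
    exact mul_le_mul ha ht (norm_nonneg _) hρ

lemma abs_esymm_le (s : Multiset ℂ) (m : ℕ) (ρ : ℝ) (hρ : 0 ≤ ρ)
    (h : ∀ z ∈ s, ‖z‖ ≤ ρ) :
    ‖s.esymm m‖ ≤ ((Multiset.card s).choose m : ℝ) * ρ ^ m := by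
  rw [Multiset.esymm]
  refine le_trans (norm_multiset_sum_le _) ?_
  rw [Multiset.map_map]
  have hb : ∀ x ∈ (s.powersetCard m).map (fun t => ‖Multiset.prod t‖), x ≤ ρ ^ m := by
    intro x hx
    obtain ⟨t, ht, rfl⟩ := Multiset.mem_map.mp hx
    obtain ⟨hts, htc⟩ := Multiset.mem_powersetCard.mp ht
    have := norm_ms_prod_le ρ hρ t fun z hz => by
      exact h z (Multiset.mem_of_le hts hz)
    rwa [htc] at this
  refine le_trans (Multiset.sum_le_card_nsmul _ _ hb) ?_
  rw [Multiset.card_map, Multiset.card_powersetCard, nsmul_eq_mul]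

lemma convex_pow_aux (u s : ℝ) (hu : 0 ≤ u) (hs0 : 0 ≤ s) (hs1 : s ≤ 1) :
    ∀ n : ℕ, (1 + u * s) ^ n ≤ 1 + s * ((1 + u) ^ n - 1) := by
  intro n
  induction n with
  | zero => simp
  | succ n ih =>
    have h1 : (0:ℝ) ≤ 1 + u * s := by nlinarith
    have h2 : (1:ℝ) ≤ (1 + u) ^ n := one_le_pow₀ (by linarith)
    have key : (0:ℝ) ≤ u * s * ((1 - s) * ((1 + u) ^ n - 1)) := by
      apply mul_nonneg (mul_nonneg hu hs0)
      apply mul_nonneg (by linarith) (by linarith)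
    calc (1 + u * s) ^ (n + 1) = (1 + u * s) ^ n * (1 + u * s) := pow_succ _ _
      _ ≤ (1 + s * ((1 + u) ^ n - 1)) * (1 + u * s) :=
          mul_le_mul_of_nonneg_right ih h1
      _ ≤ 1 + s * ((1 + u) ^ (n + 1) - 1) := by rw [pow_succ]; nlinarith

/-- Let `A` be an `N×N` integer matrix (`N ≥ 1`) with
`det(A) ≠ 0`.  Then the spectral radius of `A` satisfies
`ρ(A) ≥ ((2^{1/N} − 1)/(2N²)) · min_{0 ≤ k ≤ N−1} D(A^{k+1})/D(A^k)`.
(By Hasselblatt–Propp this says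
`δ(φ_A) ≥ ((2^{1/N} − 1)/(2N²)) · min_k deg(φ_A^{k+1})/deg(φ_A^k)`.) -/
theorem statement13 (N : ℕ) (hN : 1 ≤ N) (A : Matrix (Fin N) (Fin N) ℤ)
    (hdet : A.det ≠ 0) :
    (((2 : ℝ) ^ ((1 : ℝ) / N) - 1) / (2 * (N : ℝ) ^ 2)) *
        (Finset.range N).inf' (Finset.nonempty_range_iff.mpr (by omega))
          (fun k => Dfun ((A ^ (k + 1)).map (Int.cast : ℤ → ℝ)) /
            Dfun ((A ^ k).map (Int.cast : ℤ → ℝ))) ≤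
      specRad (A.map (Int.cast : ℤ → ℂ)) := by
  have hNpos : (0:ℝ) < N := by exact_mod_cast (by omega : 0 < N)
  have hNR : (1:ℝ) ≤ N := by exact_mod_cast hN
  haveI : Nonempty (Fin N) := ⟨⟨0, by omega⟩⟩
  set c : ℝ := ((2:ℝ) ^ ((1:ℝ)/N) - 1) / (2 * (N:ℝ)^2) with hc
  set Aℝ : Matrix (Fin N) (Fin N) ℝ := A.map (Int.cast : ℤ → ℝ) with hAR
  have hpow : ∀ k : ℕ, (A ^ k).map (Int.cast : ℤ → ℝ) = Aℝ ^ k := by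
    intro k
    have := map_pow ((Int.castRingHom ℝ).mapMatrix) A k
    simpa [RingHom.mapMatrix_apply] using this
  -- positivity of the degrees
  have hD : ∀ k : ℕ, 0 < Dfun (Aℝ ^ k) := by
    intro k
    rw [← hpow]
    have hAk : A ^ k ≠ 0 := by
      intro h
      have h0 : (A ^ k).det = 0 := by rw [h]; exact Matrix.det_zero
      rw [Matrix.det_pow] at h0
      exact pow_ne_zero k hdet h0
    obtain ⟨i, j, hij⟩ : ∃ i j, (A ^ k) i j ≠ 0 := by
      by_contra h
      push_neg at h
      exact hAk (by ext i j; simp [h])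
    have h1 : |(((A ^ k) i j : ℤ) : ℝ)| ≤ Dfun ((A ^ k).map (Int.cast : ℤ → ℝ)) := by
      simpa [Matrix.map_apply] using
        abs_entry_le_Dfun ((A ^ k).map (Int.cast : ℤ → ℝ)) i j
    have h2 : (0:ℝ) < |(((A ^ k) i j : ℤ) : ℝ)| := by
      simp only [abs_pos, ne_eq, Int.cast_eq_zero]
      exact hij
    linarith
  simp only [hpow]
  have hne : (Finset.range N).Nonempty := Finset.nonempty_range_iff.mpr (by omega)
  show c * (Finset.range N).inf' hne
      (fun k => Dfun (Aℝ ^ (k+1)) / Dfun (Aℝ ^ k)) ≤ specRad (A.map (Int.cast : ℤ → ℂ))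
  set r : ℝ := (Finset.range N).inf' hne
      (fun k => Dfun (Aℝ ^ (k+1)) / Dfun (Aℝ ^ k)) with hrdef
  set ρ : ℝ := specRad (A.map (Int.cast : ℤ → ℂ)) with hρdef
  by_contra hcon
  push_neg at hcon
  -- hcon : ρ < c * r
  have hrpos : 0 < r := by
    rw [hrdef]
    rw [Finset.lt_inf'_iff]
    intro k _
    exact div_pos (hD (k+1)) (hD k)
  have hstep : ∀ k, k < N → r * Dfun (Aℝ ^ k) ≤ Dfun (Aℝ ^ (k+1)) := by
    intro k hk
    have h1 : r ≤ Dfun (Aℝ ^ (k+1)) / Dfun (Aℝ ^ k) := by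
      rw [hrdef]
      exact Finset.inf'_le _ (Finset.mem_range.mpr hk)
    calc r * Dfun (Aℝ ^ k) ≤ (Dfun (Aℝ ^ (k+1)) / Dfun (Aℝ ^ k)) * Dfun (Aℝ ^ k) :=
          mul_le_mul_of_nonneg_right h1 (hD k).le
      _ = Dfun (Aℝ ^ (k+1)) := div_mul_cancel₀ _ (hD k).ne'
  have hchain : ∀ m k : ℕ, k + m ≤ N → r ^ m * Dfun (Aℝ ^ k) ≤ Dfun (Aℝ ^ (k + m)) := by
    intro m
    induction m with
    | zero => intro k h; simp
    | succ m ih =>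
      intro k h
      have h1 : r * Dfun (Aℝ ^ k) ≤ Dfun (Aℝ ^ (k+1)) := hstep k (by omega)
      have h2 := ih (k+1) (by omega)
      calc r ^ (m+1) * Dfun (Aℝ ^ k) = r ^ m * (r * Dfun (Aℝ ^ k)) := by ring
        _ ≤ r ^ m * Dfun (Aℝ ^ (k+1)) :=
            mul_le_mul_of_nonneg_left h1 (pow_nonneg hrpos.le m)
        _ ≤ Dfun (Aℝ ^ (k+1+m)) := h2
        _ = Dfun (Aℝ ^ (k+(m+1))) := by rw [add_assoc, add_comm 1 m]
  -- spectral radius basics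
  set q : Polynomial ℂ := (A.map (Int.cast : ℤ → ℂ)).charpoly with hqdef
  have hρfold : ρ = (q.roots.map (fun z : ℂ => ‖z‖)).fold max 0 := rfl
  have hρ0 : 0 ≤ ρ := by rw [hρfold]; exact ms_fold_max_nonneg _
  have hroot : ∀ z ∈ q.roots, ‖z‖ ≤ ρ := by
    intro z hz
    rw [hρfold]
    exact ms_le_fold_max _ _ (Multiset.mem_map_of_mem _ hz)
  -- characteristic polynomial over ℝ
  set p : Polynomial ℝ := Aℝ.charpoly with hpdef
  have hmon : p.Monic := Aℝ.charpoly_monic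
  have hdeg : p.natDegree = N := by
    rw [hpdef, Matrix.charpoly_natDegree_eq_dim, Fintype.card_fin]
  have hq : q = p.map (algebraMap ℝ ℂ) := by
    have hmm : A.map (Int.cast : ℤ → ℂ) = Aℝ.map (algebraMap ℝ ℂ) := by
      ext i j
      simp [hAR, Matrix.map_apply]
    rw [hqdef, hmm, Matrix.charpoly_map, hpdef]
  have hqmon : q.Monic := (A.map (Int.cast : ℤ → ℂ)).charpoly_monic
  have hqdeg : q.natDegree = N := by
    rw [hqdef, Matrix.charpoly_natDegree_eq_dim, Fintype.card_fin]
  have hsplit : q.Splits := IsAlgClosed.splits q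
  have hcard : Multiset.card q.roots = N := by
    rw [Polynomial.splits_iff_card_roots.mp hsplit, hqdeg]
  have hcoeff : ∀ k, k < N → |p.coeff k| ≤ (N.choose (N - k) : ℝ) * ρ ^ (N - k) := by
    intro k hk
    have h1 : q.coeff k = (algebraMap ℝ ℂ) (p.coeff k) := by
      rw [hq, Polynomial.coeff_map]
    have h2 := Polynomial.coeff_eq_esymm_roots_of_splits hsplit
      (le_of_lt (by rw [hqdeg]; exact hk) : k ≤ q.natDegree)
    rw [hqmon.leadingCoeff, one_mul, hqdeg] at h2
    have h3 : |p.coeff k| = ‖q.coeff k‖ := by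
      rw [h1]
      simp
    rw [h3, h2]
    have h4 : ‖(-1) ^ (N - k) * q.roots.esymm (N - k)‖ =
        ‖q.roots.esymm (N - k)‖ := by
      rw [norm_mul, norm_pow]
      simp
    rw [h4]
    have := abs_esymm_le q.roots (N - k) ρ hρ0 hroot
    rwa [hcard] at this
  -- Cayley–Hamilton
  have hCH : Aℝ ^ N = -(∑ k ∈ Finset.range N, p.coeff k • Aℝ ^ k) := by
    have h0 := Aℝ.aeval_self_charpoly
    rw [← hpdef, Polynomial.aeval_eq_sum_range, hdeg, Finset.sum_range_succ] at h0
    have hcN : p.coeff N = 1 := by rw [← hdeg]; exact hmon.coeff_natDegree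
    rw [hcN, one_smul] at h0
    exact eq_neg_of_add_eq_zero_right h0
  set M : ℝ := ∑ k ∈ Finset.range N, |p.coeff k| * Dfun (Aℝ ^ k) with hMdef
  have hMnn : 0 ≤ M :=
    Finset.sum_nonneg fun k _ => mul_nonneg (abs_nonneg _) (Dfun_nonneg _)
  have hentry : ∀ i j, |(Aℝ ^ N) i j| ≤ M := by
    intro i j
    rw [hCH]
    have he : (-(∑ k ∈ Finset.range N, p.coeff k • Aℝ ^ k)) i j =
        -(∑ k ∈ Finset.range N, p.coeff k * (Aℝ ^ k) i j) := by
      simp [Matrix.neg_apply, Matrix.sum_apply, Matrix.smul_apply, smul_eq_mul]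
    rw [he, abs_neg]
    calc |∑ k ∈ Finset.range N, p.coeff k * (Aℝ ^ k) i j|
        ≤ ∑ k ∈ Finset.range N, |p.coeff k * (Aℝ ^ k) i j| :=
          Finset.abs_sum_le_sum_abs _ _
      _ ≤ M := by
          rw [hMdef]
          refine Finset.sum_le_sum fun k _ => ?_
          rw [abs_mul]
          exact mul_le_mul_of_nonneg_left (abs_entry_le_Dfun _ i j) (abs_nonneg _)
  have hDN : Dfun (Aℝ ^ N) ≤ 2 * N * M := Dfun_le_of_abs_le _ M hMnn hentry
  -- strict bound on M
  have hcr : 0 < c * r := lt_of_le_of_lt hρ0 hcon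
  have hc0 : 0 < c := by nlinarith
  set S : ℝ := ∑ k ∈ Finset.range N, (N.choose (N - k) : ℝ) * c ^ (N - k) with hSdef
  have hM2 : M < S * Dfun (Aℝ ^ N) := by
    have stepA : M ≤ ∑ k ∈ Finset.range N,
        ((N.choose (N - k) : ℝ) * ρ ^ (N - k)) * Dfun (Aℝ ^ k) := by
      rw [hMdef]
      refine Finset.sum_le_sum fun k hk => ?_
      exact mul_le_mul_of_nonneg_right (hcoeff k (Finset.mem_range.mp hk)) (Dfun_nonneg _)
    have stepB : ∑ k ∈ Finset.range N, ((N.choose (N - k) : ℝ) * ρ ^ (N - k)) * Dfun (Aℝ ^ k)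
        < ∑ k ∈ Finset.range N, ((N.choose (N - k) : ℝ) * (c * r) ^ (N - k)) * Dfun (Aℝ ^ k) := by
      refine Finset.sum_lt_sum_of_nonempty hne fun k hk => ?_
      have hk' := Finset.mem_range.mp hk
      have hch : (0:ℝ) < (N.choose (N - k) : ℝ) := by
        exact_mod_cast Nat.choose_pos (by omega : N - k ≤ N)
      have hplt : ρ ^ (N - k) < (c * r) ^ (N - k) :=
        pow_lt_pow_left₀ hcon hρ0 (by omega)
      exact mul_lt_mul_of_pos_right (mul_lt_mul_of_pos_left hplt hch) (hD k)
    have stepC : ∑ k ∈ Finset.range N, ((N.choose (N - k) : ℝ) * (c * r) ^ (N - k)) * Dfun (Aℝ ^ k)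
        ≤ ∑ k ∈ Finset.range N, ((N.choose (N - k) : ℝ) * c ^ (N - k)) * Dfun (Aℝ ^ N) := by
      refine Finset.sum_le_sum fun k hk => ?_
      have hk' := Finset.mem_range.mp hk
      have h1 : r ^ (N - k) * Dfun (Aℝ ^ k) ≤ Dfun (Aℝ ^ N) := by
        have := hchain (N - k) k (by omega)
        rwa [show k + (N - k) = N from by omega] at this
      have h2 : ((N.choose (N - k) : ℝ) * (c * r) ^ (N - k)) * Dfun (Aℝ ^ k) =
          ((N.choose (N - k) : ℝ) * c ^ (N - k)) * (r ^ (N - k) * Dfun (Aℝ ^ k)) := by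
        rw [mul_pow]; ring
      rw [h2]
      exact mul_le_mul_of_nonneg_left h1
        (mul_nonneg (Nat.cast_nonneg _) (pow_nonneg hc0.le _))
    calc M ≤ _ := stepA
      _ < _ := stepB
      _ ≤ _ := stepC
      _ = S * Dfun (Aℝ ^ N) := by rw [hSdef, ← Finset.sum_mul]
  -- binomial identity and the convexity estimate
  have hSid : S = (1 + c) ^ N - 1 := by
    have h3 : S = ∑ k ∈ Finset.range N, c ^ (k+1) * (N.choose (k+1) : ℝ) := by
      rw [hSdef, ← Finset.sum_range_reflect]
      refine Finset.sum_congr rfl fun k hk => ?_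
      have hk' := Finset.mem_range.mp hk
      rw [show N - (N - 1 - k) = k + 1 from by omega]
      ring
    have h1 : (c + 1) ^ N = ∑ k ∈ Finset.range (N+1), c ^ k * (N.choose k : ℝ) := by
      rw [add_pow]
      simp
    have h2 : ∑ k ∈ Finset.range (N+1), c ^ k * (N.choose k : ℝ) =
        (∑ k ∈ Finset.range N, c ^ (k+1) * (N.choose (k+1) : ℝ)) + 1 := by
      rw [Finset.sum_range_succ']
      simp
    rw [h3, show (1:ℝ) + c = c + 1 from by ring]
    rw [h1, h2]
    ring
  have hu0 : (0:ℝ) ≤ (2:ℝ) ^ ((1:ℝ)/N) - 1 := by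
    have : (1:ℝ) ≤ (2:ℝ) ^ ((1:ℝ)/N) :=
      Real.one_le_rpow (by norm_num) (by positivity)
    linarith
  have h2N : (1 + ((2:ℝ) ^ ((1:ℝ)/N) - 1)) ^ N = 2 := by
    rw [show (1:ℝ) + ((2:ℝ) ^ ((1:ℝ)/N) - 1) = (2:ℝ) ^ ((1:ℝ)/N) from by ring]
    rw [← Real.rpow_natCast ((2:ℝ) ^ ((1:ℝ)/N)) N, ← Real.rpow_mul (by norm_num : (0:ℝ) ≤ 2)]
    rw [one_div, inv_mul_cancel₀ (ne_of_gt hNpos), Real.rpow_one]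
  have hS : S ≤ 1 / (2 * (N:ℝ)^2) := by
    have hs0 : (0:ℝ) ≤ 1 / (2 * (N:ℝ)^2) := by positivity
    have hs1 : 1 / (2 * (N:ℝ)^2) ≤ 1 := by
      rw [div_le_one (by positivity)]
      nlinarith
    have hcu : c = ((2:ℝ) ^ ((1:ℝ)/N) - 1) * (1 / (2 * (N:ℝ)^2)) := by
      rw [hc]; ring
    have hconv := convex_pow_aux ((2:ℝ) ^ ((1:ℝ)/N) - 1) (1 / (2 * (N:ℝ)^2))
      hu0 hs0 hs1 N
    rw [h2N] at hconv
    rw [hSid, hcu]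
    linarith
  -- final contradiction
  have hDNpos := hD N
  have hfin : Dfun (Aℝ ^ N) < Dfun (Aℝ ^ N) := by
    have e1 : Dfun (Aℝ ^ N) < 2 * N * (S * Dfun (Aℝ ^ N)) := by
      have := mul_lt_mul_of_pos_left hM2 (show (0:ℝ) < 2 * N by positivity)
      linarith
    have e2 : 2 * (N:ℝ) * (S * Dfun (Aℝ ^ N)) ≤
        2 * N * ((1 / (2 * (N:ℝ)^2)) * Dfun (Aℝ ^ N)) := by
      have := mul_le_mul_of_nonneg_right hS (Dfun_nonneg (Aℝ ^ N))
      nlinarith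
    have e3 : 2 * (N:ℝ) * ((1 / (2 * (N:ℝ)^2)) * Dfun (Aℝ ^ N)) ≤ Dfun (Aℝ ^ N) := by
      have h : 2 * (N:ℝ) * ((1 / (2 * (N:ℝ)^2)) * Dfun (Aℝ ^ N)) = Dfun (Aℝ ^ N) / N := by
        field_simp
      rw [h]
      exact div_le_self (Dfun_nonneg _) hNR
    linarith
  exact absurd hfin (lt_irrefl _)
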